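/- Fix φ ∈ (0, π/2] and real numbers ξ, η. Let p₃ : [-1,1] → ℝ² be the cubic Bézier curve p₃(t) = Σ_{j=0}^{3} B_j³(t) b_j with control points b₀ = (cos φ, -sin φ), b₁ = (ξ, -η), b₂ = (ξ, η), b₃ = (cos φ, sin φ), and set ψ₃(t) = ‖p₃(t)‖² - 1. Then ψ₃(2-√3) = 0 if and only if e₁(ξ, η; φ) = 0, and ψ₃(√3-1) = 0 if and only if e₂(ξ, η; φ) = 0, where e_i(ξ, η; φ) = (ξ - p_i(φ))²/a_i² + (η - q_i(φ))²/b_i² - 1 with centers (p₁(φ), q₁(φ)) = ((1/9)(3 - 4√3) cos φ, (1/9)(-3 - 4√3) sin φ), (p₂(φ), q₂(φ)) = ((1/9)(-3 - 8√3) cos φ, (1/9)(-9 - 8√3) sin φ) and semiaxes (a₁, b₁) = ((2/9)(3 + 2√3), (2/9)(12 + 7√3)), (a₂, b₂) = ((4/9)(3 + 2√3), (2/9)(9 + 5√3)). -/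

import Mathlib

open Real

private lemma step_iff (ψv Ev D poly : ℝ) (hD : D ≠ 0) (h1 : ψv * D = poly)
    (h2 : Ev * D = poly) : (ψv = 0 ↔ Ev = 0) := by
  constructor <;> intro h
  · have h3 : Ev * D = 0 := by rw [h2, ← h1, h, zero_mul]
    exact (mul_eq_zero.mp h3).resolve_right hD
  · have h3 : ψv * D = 0 := by rw [h1, ← h2, h, zero_mul]
    exact (mul_eq_zero.mp h3).resolve_right hD

/-- For `φ ∈ (0, π/2]` and reals `ξ, η`, the cubic Bézier curve with control points
`(cos φ, -sin φ)`, `(ξ, -η)`, `(ξ, η)`, `(cos φ, sin φ)` has simplified radial error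
`ψ₃(t) = ‖p₃(t)‖² - 1` satisfying: `ψ₃(2-√3) = 0` iff `e₁(ξ,η;φ) = 0`, and
`ψ₃(√3-1) = 0` iff `e₂(ξ,η;φ) = 0`, where `e₁`, `e₂` are the stated ellipses. -/
theorem cubic_G0_system_is_two_ellipses (φ : ℝ) (hφ : φ ∈ Set.Ioc 0 (π / 2)) (ξ η : ℝ)
    (p₃ : ℝ → EuclideanSpace ℝ (Fin 2))
    (hp₃ : ∀ t : ℝ, p₃ t =
      ((1 - t) / 2) ^ 3 • (!₂[Real.cos φ, -Real.sin φ] : EuclideanSpace ℝ (Fin 2)) +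
      (3 * ((1 + t) / 2) * ((1 - t) / 2) ^ 2) • (!₂[ξ, -η] : EuclideanSpace ℝ (Fin 2)) +
      (3 * ((1 + t) / 2) ^ 2 * ((1 - t) / 2)) • (!₂[ξ, η] : EuclideanSpace ℝ (Fin 2)) +
      ((1 + t) / 2) ^ 3 • (!₂[Real.cos φ, Real.sin φ] : EuclideanSpace ℝ (Fin 2)))
    (ψ₃ : ℝ → ℝ) (hψ₃ : ∀ t : ℝ, ψ₃ t = ‖p₃ t‖ ^ 2 - 1) :
    (ψ₃ (2 - Real.sqrt 3) = 0 ↔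
      (ξ - (1/9) * (3 - 4 * Real.sqrt 3) * Real.cos φ) ^ 2 /
          ((2/9) * (3 + 2 * Real.sqrt 3)) ^ 2 +
        (η - (1/9) * (-3 - 4 * Real.sqrt 3) * Real.sin φ) ^ 2 /
          ((2/9) * (12 + 7 * Real.sqrt 3)) ^ 2 - 1 = 0) ∧
    (ψ₃ (Real.sqrt 3 - 1) = 0 ↔
      (ξ - (1/9) * (-3 - 8 * Real.sqrt 3) * Real.cos φ) ^ 2 /
          ((4/9) * (3 + 2 * Real.sqrt 3)) ^ 2 +
        (η - (1/9) * (-9 - 8 * Real.sqrt 3) * Real.sin φ) ^ 2 /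
          ((2/9) * (9 + 5 * Real.sqrt 3)) ^ 2 - 1 = 0) := by
  have hnorm : ∀ v : EuclideanSpace ℝ (Fin 2), ‖v‖ ^ 2 = v 0 ^ 2 + v 1 ^ 2 := by
    intro v
    rw [EuclideanSpace.norm_eq, Real.sq_sqrt (by positivity)]
    simp [Fin.sum_univ_two, sq_abs]
  set r := Real.sqrt 3 with hrdef
  have hr : r ^ 2 = 3 := Real.sq_sqrt (by norm_num)
  have hrpos : 0 < r := Real.sqrt_pos.mpr (by norm_num)
  set c := Real.cos φ with hcdef
  set s := Real.sin φ with hsdef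
  have h0 : ∀ t : ℝ, (p₃ t) 0 =
      ((1 - t) / 2) ^ 3 * c + (3 * ((1 + t) / 2) * ((1 - t) / 2) ^ 2) * ξ +
      (3 * ((1 + t) / 2) ^ 2 * ((1 - t) / 2)) * ξ + ((1 + t) / 2) ^ 3 * c := by
    intro t
    rw [hp₃]
    rfl
  have h1 : ∀ t : ℝ, (p₃ t) 1 =
      ((1 - t) / 2) ^ 3 * (-s) + (3 * ((1 + t) / 2) * ((1 - t) / 2) ^ 2) * (-η) +
      (3 * ((1 + t) / 2) ^ 2 * ((1 - t) / 2)) * η + ((1 + t) / 2) ^ 3 * s := by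
    intro t
    rw [hp₃]
    rfl
  have ha1 : ((2/9) * (3 + 2 * r)) ^ 2 ≠ 0 := by positivity
  have hb1 : ((2/9) * (12 + 7 * r)) ^ 2 ≠ 0 := by positivity
  have ha2 : ((4/9) * (3 + 2 * r)) ^ 2 ≠ 0 := by positivity
  have hb2 : ((2/9) * (9 + 5 * r)) ^ 2 ≠ 0 := by positivity
  constructor
  · refine step_iff _ _ (((2/9) * (3 + 2 * r)) ^ 2 * ((2/9) * (12 + 7 * r)) ^ 2)
      ((ξ - (1/9) * (3 - 4 * r) * c) ^ 2 * ((2/9) * (12 + 7 * r)) ^ 2 +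
        (η - (1/9) * (-3 - 4 * r) * s) ^ 2 * ((2/9) * (3 + 2 * r)) ^ 2 -
        ((2/9) * (3 + 2 * r)) ^ 2 * ((2/9) * (12 + 7 * r)) ^ 2)
      (mul_ne_zero ha1 hb1) ?_ ?_
    · rw [hψ₃, hnorm, h0, h1]
      linear_combination ((-572/27) * η^2 + (-80/27) * ξ^2 + (2696/81) * s * η + (-116/9) * s^2 + (1120/81) * c * ξ + (-880/81) * c^2 + (2032/81) * r * η^2 + (296/81) * r * ξ^2 + (-3200/243) * r * s * η + (-368/81) * r * s^2 + (976/243) * r * c * ξ + (-1864/243) * r * c^2 + (5896/243) * r^2 * η^2 + (2395/243) * r^2 * ξ^2 + (-28736/729) * r^2 * s * η + (2152/243) * r^2 * s^2 + (-12154/729) * r^2 * c * ξ + (4969/729) * r^2 * c^2 + (-7268/243) * r^3 * η^2 + (356/243) * r^3 * ξ^2 + (31256/2187) * r^3 * s * η + (-68/243) * r^3 * s^2 + (-10216/2187) * r^3 * c * ξ + (7012/2187) * r^3 * c^2 + (-5675/729) * r^4 * η^2 + (-2147/729) * r^4 * ξ^2 + (8986/729) * r^4 * s * η + (-6049/2187)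 * r^4 * s^2 + (11314/2187) * r^4 * c * ξ + (-4873/2187) * r^4 * c^2 + (104/9) * r^5 * η^2 + (-308/729) * r^5 * ξ^2 + (-14384/2187) * r^5 * s * η + (5960/6561) * r^5 * s^2 + (616/729) * r^5 * c * ξ + (-308/729) * r^5 * c^2 + (-131/729) * r^6 * η^2 + (196/729) * r^6 * ξ^2 + (-1306/2187) * r^6 * s * η + (479/2187) * r^6 * s^2 + (-392/729) * r^6 * c * ξ + (196/729) * r^6 * c^2 + (-364/243) * r^7 * η^2 + (728/729) * r^7 * s * η + (-364/2187) * r^7 * s^2 + (196/729) * r^8 * η^2 + (-392/2187) * r^8 * s * η + (196/6561) * r^8 * s^2) * hr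
    · field_simp
  · refine step_iff _ _ (((4/9) * (3 + 2 * r)) ^ 2 * ((2/9) * (9 + 5 * r)) ^ 2)
      ((ξ - (1/9) * (-3 - 8 * r) * c) ^ 2 * ((2/9) * (9 + 5 * r)) ^ 2 +
        (η - (1/9) * (-9 - 8 * r) * s) ^ 2 * ((4/9) * (3 + 2 * r)) ^ 2 -
        ((4/9) * (3 + 2 * r)) ^ 2 * ((2/9) * (9 + 5 * r)) ^ 2)
      (mul_ne_zero ha2 hb2) ?_ ?_
    · rw [hψ₃, hnorm, h0, h1]
      linear_combination ((16/27) * η^2 + (4/3) * ξ^2 + (32/27) * s * η + (-16/9) * s^2 + (8/9) * c * ξ + (-20/9) * c^2 + (64/81) * r * η^2 + (40/27) * r * ξ^2 + (-1088/243) * r * s * η + (256/81) * r * s^2 + (-304/81) * r * c * ξ + (184/81) * r * c^2 + (-1184/243) * r^2 * η^2 + (-1088/243) * r^2 * ξ^2 + (4576/729) * r^2 * s * η + (128/27) * r^2 * s^2 + (32/729) * r^2 * c * ξ + (3232/729) * r^2 * c^2 + (784/243) * r^3 * η^2 + (-584/81) * r^3 * ξ^2 + (22624/2187) * r^3 * s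 * η + (496/729) * r^3 * s^2 + (16816/2187) * r^3 * c * ξ + (-1048/2187) * r^3 * c^2 + (6004/729) * r^4 * η^2 + (-1244/729) * r^4 * ξ^2 + (-584/243) * r^4 * s * η + (628/729) * r^4 * s^2 + (4264/2187) * r^4 * c * ξ + (-532/2187) * r^4 * c^2 + (-64/27) * r^5 * η^2 + (1040/729) * r^5 * ξ^2 + (-4864/2187) * r^5 * s * η + (6592/6561) * r^5 * s^2 + (-2080/729) * r^5 * c * ξ + (1040/729) * r^5 * c^2 + (-2924/729) * r^6 * η^2 + (400/729) * r^6 * ξ^2 + (2648/2187) * r^6 * s * η + (92/2187) * r^6 * s^2 + (-800/729) * r^6 * c * ξ + (400/729) * r^6 * c^2 + (80/243) * r^7 * η^2 + (-160/729) * r^7 * s * η + (80/2187) * r^7 * s^2 + (400/729) * r^8 * η^2 + (-800/2187) * r^8 * s * η + (400/6561) * r^8 * s^2) * hr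
    · field_simp
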